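/- Suppose H is stoquastic in the basis B, positive semidefinite with ‖H‖ > E₀, and its ground state ψ has strictly positive entries (ψ_x > 0 for all x ∈ B). Define P_{xy} := (ψ_y/ψ_x)·(‖H‖δ_{xy} − H_{xy})/(‖H‖ − E₀). Then P is a row-stochastic matrix: P_{xy} ≥ 0 for all x, y ∈ B and ∑_{y∈B} P_{xy} = 1 for every x ∈ B; moreover it satisfies detailed balance with respect to π_x := ψ_x², i.e. π_x P_{xy} = π_y P_{yx} for all x, y. -/

import Mathlib

open scoped BigOperators ComplexOrder

/-- The ℓ²-operator norm of a matrix over ℂ. -/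
noncomputable def opNorm {B : Type*} [Fintype B] [DecidableEq B] (H : Matrix B B ℂ) : ℝ :=
  ‖Matrix.toEuclideanCLM (𝕜 := ℂ) H‖

/-- The ground-state probability measure of a subset `S`. -/
noncomputable def piS {B : Type*} (ψ : B → ℂ) (S : Finset B) : ℝ :=
  ∑ z ∈ S, ‖ψ z‖ ^ 2

open scoped Classical in
/-- The interior boundary `∂S` of the set `S` with respect to the matrix `H`. -/
noncomputable def bdry {B : Type*} [Fintype B] (H : Matrix B B ℂ) (S : Finset B) : Finset B :=
  S.filter (fun x => ∃ y ∉ S, H x y ≠ 0)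

lemma diag_re_le_opNorm {B : Type*} [Fintype B] [DecidableEq B] (H : Matrix B B ℂ) (x : B) :
    (H x x).re ≤ opNorm H := by
  set f := Matrix.toEuclideanCLM (𝕜 := ℂ) H with hf
  set e : EuclideanSpace ℂ B := EuclideanSpace.single x 1 with he
  have h1 : ‖e‖ = 1 := by simp [he]
  have hfe : f e x = H x x := by
    have := Matrix.ofLp_toEuclideanCLM (𝕜 := ℂ) H e
    have h2 : WithLp.ofLp e = Pi.single x 1 := by simp [he]
    rw [h2] at this
    have h3 : f e x = H.mulVec (Pi.single x 1) x := congrFun this x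
    rw [h3, Matrix.mulVec_single]
    simp
  have hinner : (inner ℂ e (f e) : ℂ) = H x x := by
    rw [EuclideanSpace.inner_single_left]
    simp [hfe]
  have h4 : (H x x).re ≤ ‖(inner ℂ e (f e) : ℂ)‖ := by
    rw [hinner]; exact Complex.re_le_norm _
  have h5 : ‖(inner ℂ e (f e) : ℂ)‖ ≤ ‖f‖ := by
    calc ‖(inner ℂ e (f e) : ℂ)‖ ≤ ‖e‖ * ‖f e‖ := norm_inner_le_norm _ _
    _ ≤ ‖e‖ * (‖f‖ * ‖e‖) := by
        have := f.le_opNorm e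
        nlinarith [norm_nonneg (f e), norm_nonneg f]
    _ = ‖f‖ := by rw [h1]; ring
  calc (H x x).re ≤ ‖(inner ℂ e (f e) : ℂ)‖ := h4
  _ ≤ ‖f‖ := h5

/-- For a stoquastic `H` with strictly positive ground state `ψ`, the matrix
`P_{xy} := (ψ_y/ψ_x)(‖H‖δ_{xy} - H_{xy})/(‖H‖-E₀)` is row-stochastic and satisfies
detailed balance with respect to `π_x := ψ_x²`. -/
theorem stmt_19 {B : Type*} [Fintype B] [DecidableEq B]
    (H : Matrix B B ℂ) (hH : H.IsHermitian) (hPSD : H.PosSemidef)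
    -- `H` is stoquastic in the basis `B`: real entries, non-positive off the diagonal:
    (hreal : ∀ z z', (H z z').im = 0)
    (hstoq : ∀ z z', z ≠ z' → (H z z').re ≤ 0)
    -- `ψ` is the strictly positive unit-norm ground state, `E₀` the smallest eigenvalue:
    (E₀ : ℝ) (hleast : ∀ i, E₀ ≤ hH.eigenvalues i)
    (hgap : E₀ < opNorm H)
    (ψ : B → ℝ) (hpos : ∀ x, 0 < ψ x) (hψnorm : ∑ z, ψ z ^ 2 = 1)
    (hground : H.mulVec (fun x => (ψ x : ℂ)) = (E₀ : ℂ) • fun x => (ψ x : ℂ))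
    (P : Matrix B B ℝ)
    (hP : P = fun x y =>
      ψ y / ψ x * ((opNorm H * (if x = y then 1 else 0) - (H x y).re) / (opNorm H - E₀))) :
    (∀ x y, 0 ≤ P x y) ∧
    (∀ x, ∑ y, P x y = 1) ∧
    (∀ x y, ψ x ^ 2 * P x y = ψ y ^ 2 * P y x) := by
  have hgap' : (0:ℝ) < opNorm H - E₀ := by linarith
  subst hP
  refine ⟨?_, ?_, ?_⟩
  · intro x y
    have hψ : 0 < ψ y / ψ x := div_pos (hpos y) (hpos x)
    refine mul_nonneg hψ.le (div_nonneg ?_ hgap'.le)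
    by_cases h : x = y
    · subst h
      rw [if_pos rfl, mul_one, sub_nonneg]
      exact diag_re_le_opNorm H x
    · simp only [if_neg h, mul_zero, zero_sub, neg_nonneg]
      have := hstoq x y h
      linarith
  · intro x
    have hg := congrFun hground x
    simp only [Matrix.mulVec, dotProduct, Pi.smul_apply, smul_eq_mul] at hg
    have hre : ∑ y, (H x y).re * ψ y = E₀ * ψ x := by
      have := congrArg Complex.re hg
      simpa [Complex.re_sum, Complex.mul_re] using this
    have key : ∑ y, ψ y * (opNorm H * (if x = y then 1 else 0) - (H x y).re)
        = (opNorm H - E₀) * ψ x := by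
      rw [Finset.sum_congr rfl (fun y _ => by by_cases h : x = y <;> simp [h] <;> ring :
        ∀ y ∈ Finset.univ, ψ y * (opNorm H * (if x = y then 1 else 0) - (H x y).re)
          = opNorm H * (if x = y then ψ y else 0) - (H x y).re * ψ y)]
      rw [Finset.sum_sub_distrib, ← Finset.mul_sum, Finset.sum_ite_eq, if_pos (Finset.mem_univ x),
        hre]
      ring
    have hx := (hpos x).ne'
    calc ∑ y, ψ y / ψ x * ((opNorm H * (if x = y then 1 else 0) - (H x y).re) / (opNorm H - E₀))
        = (∑ y, ψ y * (opNorm H * (if x = y then 1 else 0) - (H x y).re)) / (ψ x * (opNorm H - E₀)) := by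
          rw [Finset.sum_div]
          exact Finset.sum_congr rfl fun y _ => by field_simp
      _ = 1 := by rw [key]; field_simp
  · intro x y
    have hsym : (H x y).re = (H y x).re := by
      have := congrFun (congrFun hH y) x
      simp only [Matrix.conjTranspose_apply] at this
      rw [← this]
      simp [Complex.star_def]
    have hx := (hpos x).ne'
    have hy := (hpos y).ne'
    field_simp
    rw [hsym]
    by_cases h : x = y
    · subst h; ring
    · rw [if_neg h, if_neg (Ne.symm h)]
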